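/- For integers t, k, v with t ≥ 2, v ≥ 2, k ≥ 2t and v(t−1) ≤ v^t − 1, there exists a partial m-covering array PCA(N; t, k, v, m) with m = v^t − v(t−1) + 1 and N ≤ (v^(t−1)/(t−1))·(1 + ln(t·C(k,t−1)·C(v^t, v(t−1)))); in particular, for fixed t and v such an array exists with N = O(v^(t−1)·ln k) rows, matching the order of the lower bound for covering arrays. -/

import Mathlib

open Finset

variable {Ω : Type*} [Fintype Ω] [DecidableEq Ω] {ι : Type*} [DecidableEq ι]

/-- Set of points avoiding all events indexed by `T`. -/
def avoidSet (E : ι → Finset Ω) (T : Finset ι) : Finset Ω :=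
  Finset.univ.filter fun ω => ∀ a ∈ T, ω ∉ E a

lemma mem_avoidSet {E : ι → Finset Ω} {T : Finset ι} {ω : Ω} :
    ω ∈ avoidSet E T ↔ ∀ a ∈ T, ω ∉ E a := by simp [avoidSet]

lemma avoidSet_empty (E : ι → Finset Ω) : avoidSet E ∅ = Finset.univ := by
  simp [avoidSet]

lemma avoidSet_insert (E : ι → Finset Ω) (b : ι) (T : Finset ι) :
    avoidSet E (insert b T) = avoidSet E T \ (E b ∩ avoidSet E T) := by
  ext ω; simp [mem_avoidSet, mem_sdiff]; tauto

lemma avoidSet_mono (E : ι → Finset Ω) {T T' : Finset ι} (h : T ⊆ T') :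
    avoidSet E T' ⊆ avoidSet E T := by
  intro ω hω; rw [mem_avoidSet] at *; exact fun a ha => hω a (h ha)

lemma card_avoidSet_insert (E : ι → Finset Ω) (b : ι) (T : Finset ι) :
    (avoidSet E (insert b T)).card = (avoidSet E T).card - (E b ∩ avoidSet E T).card := by
  rw [avoidSet_insert, card_sdiff_of_subset inter_subset_right]

theorem finite_LLL [Nonempty Ω] (E : ι → Finset Ω) (Γ : ι → Finset ι) (p x : ℝ) (m : ℕ)
    (hx0 : 0 < x) (hx1 : x < 1)
    (hΓ : ∀ a, (Γ a).card ≤ m)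
    (hp : ∀ a, ((E a).card : ℝ) ≤ p * (Fintype.card Ω : ℝ))
    (hpx : p ≤ x * (1 - x) ^ m)
    (hind : ∀ (a : ι) (T : Finset ι), (∀ b ∈ T, b ∉ Γ a) →
      (E a ∩ avoidSet E T).card * (Fintype.card Ω) = (E a).card * (avoidSet E T).card) :
    ∀ T : Finset ι, 0 < (avoidSet E T).card ∧
      ∀ a : ι, ((E a ∩ avoidSet E T).card : ℝ) ≤ x * (avoidSet E T).card := by
  have hΩ : (0:ℝ) < (Fintype.card Ω : ℝ) := by
    exact_mod_cast Fintype.card_pos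
  have hx0' : (0:ℝ) ≤ 1 - x := by linarith
  -- main step
  intro T
  induction T using Finset.strongInduction with
  | _ T IH =>
  -- key peeling estimate
  have key : ∀ U : Finset ι, U ⊂ T → ∀ b : ι,
      (1 - x) * ((avoidSet E U).card : ℝ) ≤ ((avoidSet E (insert b U)).card : ℝ) := by
    intro U hU b
    obtain ⟨hpos, hbd⟩ := IH U hU
    have hsub : E b ∩ avoidSet E U ⊆ avoidSet E U := inter_subset_right
    have hcast : ((avoidSet E (insert b U)).card : ℝ)
        = ((avoidSet E U).card : ℝ) - ((E b ∩ avoidSet E U).card : ℝ) := by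
      rw [card_avoidSet_insert]
      exact_mod_cast Nat.cast_sub (card_le_card hsub)
    rw [hcast]
    have := hbd b
    nlinarith [hbd b]
  -- positivity
  have hpos : 0 < (avoidSet E T).card := by
    rcases T.eq_empty_or_nonempty with rfl | ⟨b, hb⟩
    · rw [avoidSet_empty, card_univ]; exact Fintype.card_pos
    · have herase : T.erase b ⊂ T := erase_ssubset hb
      have h1 := key (T.erase b) herase b
      rw [insert_erase hb] at h1
      have hpos' := (IH _ herase).1
      have : (0:ℝ) < ((avoidSet E T).card : ℝ) := by
        have : (0:ℝ) < ((avoidSet E (T.erase b)).card : ℝ) := by exact_mod_cast hpos'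
        nlinarith
      exact_mod_cast this
  refine ⟨hpos, fun a => ?_⟩
  set T1 := T ∩ Γ a with hT1
  set T2 := T \ Γ a with hT2
  have hT2T : T2 ⊆ T := sdiff_subset
  have hunion : T2 ∪ T1 = T := sdiff_union_inter T (Γ a)
  have hT2Γ : ∀ b ∈ T2, b ∉ Γ a := by intro b hb; exact (mem_sdiff.mp hb).2
  have hindT2 := hind a T2 hT2Γ
  -- the basic conditional bound on T2
  have hbase : ((E a ∩ avoidSet E T2).card : ℝ) ≤ p * ((avoidSet E T2).card : ℝ) := by
    have hc : ((E a ∩ avoidSet E T2).card : ℝ) * (Fintype.card Ω : ℝ)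
        = ((E a).card : ℝ) * ((avoidSet E T2).card : ℝ) := by exact_mod_cast hindT2
    have h2 : ((E a).card : ℝ) * ((avoidSet E T2).card : ℝ)
        ≤ p * (Fintype.card Ω : ℝ) * ((avoidSet E T2).card : ℝ) := by
      have := hp a
      have hnn : (0:ℝ) ≤ ((avoidSet E T2).card : ℝ) := Nat.cast_nonneg _
      nlinarith
    have h3 : ((E a ∩ avoidSet E T2).card : ℝ) * (Fintype.card Ω : ℝ)
        ≤ (p * ((avoidSet E T2).card : ℝ)) * (Fintype.card Ω : ℝ) := by nlinarith
    exact le_of_mul_le_mul_right h3 hΩ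
  -- chain bound
  have chain : ∀ V : Finset ι, V ⊆ T1 →
      (1 - x) ^ V.card * ((avoidSet E T2).card : ℝ) ≤ ((avoidSet E (T2 ∪ V)).card : ℝ) := by
    intro V
    induction V using Finset.induction_on with
    | empty => intro _; simp
    | @insert b V hbV ihV =>
      intro hins
      have hVsub : V ⊆ T1 := fun y hy => hins (mem_insert_of_mem hy)
      have hbT1 : b ∈ T1 := hins (mem_insert_self b V)
      have hbΓ : b ∈ Γ a := (mem_inter.mp hbT1).2
      have hbT : b ∈ T := (mem_inter.mp hbT1).1
      have hbU : b ∉ T2 ∪ V := by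
        simp only [mem_union]
        rintro (h | h)
        · exact (mem_sdiff.mp h).2 hbΓ
        · exact hbV h
      have hUT : T2 ∪ V ⊂ T := by
        refine Finset.ssubset_iff_of_subset ?_ |>.mpr ⟨b, hbT, hbU⟩
        exact union_subset hT2T (fun y hy => mem_of_mem_inter_left (hVsub hy))
      have hk := key (T2 ∪ V) hUT b
      have hrw : insert b (T2 ∪ V) = T2 ∪ insert b V := by
        rw [union_insert]
      rw [hrw] at hk
      calc (1 - x) ^ (insert b V).card * ((avoidSet E T2).card : ℝ)
          = (1 - x) * ((1 - x) ^ V.card * ((avoidSet E T2).card : ℝ)) := by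
            rw [card_insert_of_notMem hbV]; ring
        _ ≤ (1 - x) * ((avoidSet E (T2 ∪ V)).card : ℝ) := by
            exact mul_le_mul_of_nonneg_left (ihV hVsub) hx0'
        _ ≤ _ := hk
  have hchainT : (1 - x) ^ T1.card * ((avoidSet E T2).card : ℝ)
      ≤ ((avoidSet E T).card : ℝ) := by
    have := chain T1 (Finset.Subset.refl T1)
    rwa [hunion] at this
  have hmono : ((E a ∩ avoidSet E T).card : ℝ) ≤ ((E a ∩ avoidSet E T2).card : ℝ) := by
    exact_mod_cast card_le_card (inter_subset_inter (Finset.Subset.refl _) (avoidSet_mono E hT2T))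
  have hpowle : (1 - x) ^ m ≤ (1 - x) ^ T1.card := by
    apply pow_le_pow_of_le_one hx0' (by linarith)
    exact le_trans (card_le_card inter_subset_right) (hΓ a)
  have hT2nn : (0:ℝ) ≤ ((avoidSet E T2).card : ℝ) := Nat.cast_nonneg _
  calc ((E a ∩ avoidSet E T).card : ℝ)
      ≤ ((E a ∩ avoidSet E T2).card : ℝ) := hmono
    _ ≤ p * ((avoidSet E T2).card : ℝ) := hbase
    _ ≤ x * (1 - x) ^ T1.card * ((avoidSet E T2).card : ℝ) := by
        have : p ≤ x * (1 - x) ^ T1.card :=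
          le_trans hpx (by nlinarith [hpowle, hx0.le])
        nlinarith
    _ = x * ((1 - x) ^ T1.card * ((avoidSet E T2).card : ℝ)) := by ring
    _ ≤ x * ((avoidSet E T).card : ℝ) := mul_le_mul_of_nonneg_left hchainT hx0.le

theorem finite_LLL_exists [Nonempty Ω] [Fintype ι] (E : ι → Finset Ω) (Γ : ι → Finset ι)
    (p x : ℝ) (m : ℕ)
    (hx0 : 0 < x) (hx1 : x < 1)
    (hΓ : ∀ a, (Γ a).card ≤ m)
    (hp : ∀ a, ((E a).card : ℝ) ≤ p * (Fintype.card Ω : ℝ))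
    (hpx : p ≤ x * (1 - x) ^ m)
    (hind : ∀ (a : ι) (T : Finset ι), (∀ b ∈ T, b ∉ Γ a) →
      (E a ∩ avoidSet E T).card * (Fintype.card Ω) = (E a).card * (avoidSet E T).card) :
    ∃ ω : Ω, ∀ a : ι, ω ∉ E a := by
  obtain ⟨hpos, -⟩ := finite_LLL E Γ p x m hx0 hx1 hΓ hp hpx hind Finset.univ
  obtain ⟨ω, hω⟩ := card_pos.mp hpos
  exact ⟨ω, fun a => mem_avoidSet.mp hω a (mem_univ a)⟩


open Finset

theorem cylinder_indep {κ α : Type*} [Fintype κ] [DecidableEq κ] [Fintype α] [DecidableEq α]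
    (C : Finset κ) (A B : Finset (κ → α))
    (hA : ∀ ω₁ ω₂ : κ → α, (∀ j ∈ C, ω₁ j = ω₂ j) → ω₁ ∈ A → ω₂ ∈ A)
    (hB : ∀ ω₁ ω₂ : κ → α, (∀ j ∉ C, ω₁ j = ω₂ j) → ω₁ ∈ B → ω₂ ∈ B) :
    (A ∩ B).card * Fintype.card (κ → α) = A.card * B.card := by
  classical
  have e : ({ω // ω ∈ A} × {ω // ω ∈ B}) ≃ ({ω // ω ∈ A ∩ B} × (κ → α)) := by
    refine
      { toFun := fun ab =>
          (⟨C.piecewise ab.1.1 ab.2.1, ?_⟩, C.piecewise ab.2.1 ab.1.1),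
        invFun := fun uw =>
          (⟨C.piecewise uw.1.1 uw.2, ?_⟩, ⟨C.piecewise uw.2 uw.1.1, ?_⟩),
        left_inv := ?_, right_inv := ?_ }
    · rw [mem_inter]
      constructor
      · exact hA ab.1.1 _ (fun j hj => (C.piecewise_eq_of_mem _ _ hj).symm) ab.1.2
      · exact hB ab.2.1 _ (fun j hj => (C.piecewise_eq_of_notMem _ _ hj).symm) ab.2.2
    · exact hA uw.1.1 _ (fun j hj => (C.piecewise_eq_of_mem _ _ hj).symm)
        (mem_inter.mp uw.1.2).1
    · exact hB uw.1.1 _ (fun j hj => (C.piecewise_eq_of_notMem _ _ hj).symm)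
        (mem_inter.mp uw.1.2).2
    · rintro ⟨⟨a, ha⟩, ⟨b, hb⟩⟩
      refine Prod.ext (Subtype.ext ?_) (Subtype.ext ?_) <;> funext j <;>
        by_cases hj : j ∈ C <;>
        simp [Finset.piecewise_eq_of_mem, Finset.piecewise_eq_of_notMem, hj]
    · rintro ⟨⟨u, hu⟩, w⟩
      refine Prod.ext (Subtype.ext ?_) ?_ <;> funext j <;>
        by_cases hj : j ∈ C <;>
        simp [Finset.piecewise_eq_of_mem, Finset.piecewise_eq_of_notMem, hj]
  have := Fintype.card_congr e
  simp only [Fintype.card_prod, Fintype.card_coe] at this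
  omega


open Real

/-- Second-order bound: `1 - c ≤ exp (-(c + c²/2))` for `c ∈ [0,1]`. -/
lemma one_sub_le_exp_neg (c : ℝ) (h0 : 0 ≤ c) (h1 : c ≤ 1) :
    1 - c ≤ Real.exp (-(c + c ^ 2 / 2)) := by
  have habs : |c| ≤ 1 := by rwa [abs_of_nonneg h0]
  have hb := Real.exp_bound habs (by norm_num : 0 < 3)
  have hsum : ∑ m ∈ Finset.range 3, c ^ m / (m.factorial : ℝ) = 1 + c + c ^ 2 / 2 := by
    norm_num [Finset.sum_range_succ, Nat.factorial]
  rw [hsum, abs_of_nonneg h0] at hb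
  have hexp3 : Real.exp c ≤ 1 + c + c ^ 2 / 2 + 2 / 9 * c ^ 3 := by
    have h5 := (abs_le.mp hb).2
    norm_num [Nat.factorial] at h5
    nlinarith [h5]
  have hstep : (1 - c) * Real.exp c ≤ 1 - c ^ 2 / 2 := by nlinarith [Real.exp_pos c]
  have hstep2 : (1:ℝ) - c ^ 2 / 2 ≤ Real.exp (-(c ^ 2 / 2)) := by
    have := Real.add_one_le_exp (-(c ^ 2 / 2)); linarith
  calc 1 - c = (1 - c) * Real.exp c * Real.exp (-c) := by
        rw [mul_assoc, ← Real.exp_add]; simp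
    _ ≤ (1 - c ^ 2 / 2) * Real.exp (-c) := by
        exact mul_le_mul_of_nonneg_right hstep (Real.exp_nonneg _)
    _ ≤ Real.exp (-(c ^ 2 / 2)) * Real.exp (-c) := by
        exact mul_le_mul_of_nonneg_right hstep2 (Real.exp_nonneg _)
    _ = Real.exp (-(c + c ^ 2 / 2)) := by rw [← Real.exp_add]; ring_nf

/-- Main numeric estimate for the LLL application. -/
lemma numeric_main (n d M N : ℕ) (B : ℝ)
    (hd : 2 ≤ d) (h2d : 2 * d ≤ n) (hM : 16 ≤ M) (hMx : 2 * n ≤ M * d)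
    (hB : B = ((n : ℝ) / (d : ℝ)) * (1 + Real.log M))
    (hBN : B < N + 1) :
    Real.exp 1 * ((M : ℝ) + 1) * ((((n - d : ℕ)) : ℝ) / (n : ℝ)) ^ N ≤ 1 := by
  have hd0 : (0:ℝ) < d := by exact_mod_cast (by omega : 0 < d)
  have hn0 : (0:ℝ) < n := by exact_mod_cast (by omega : 0 < n)
  have hdn : d ≤ n := by omega
  have hM0 : (0:ℝ) < M := by exact_mod_cast (by omega : 0 < M)
  set c : ℝ := (d : ℝ) / n with hc
  have hc0 : 0 < c := div_pos hd0 hn0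
  have hchalf : c ≤ 1 / 2 := by
    rw [hc, div_le_div_iff₀ hn0 (by norm_num : (0:ℝ) < 2)]
    have : (2:ℝ) * d ≤ n := by exact_mod_cast h2d
    linarith
  have hbase : (((n - d : ℕ)) : ℝ) / (n : ℝ) = 1 - c := by
    rw [Nat.cast_sub hdn, hc]
    field_simp
  have hlog16 : (5:ℝ) / 2 ≤ Real.log M := by
    have h16 : Real.log 16 ≤ Real.log M := by
      apply Real.log_le_log (by norm_num)
      exact_mod_cast hM
    have : Real.log 16 = 4 * Real.log 2 := by
      rw [show (16:ℝ) = 2 ^ 4 by norm_num, Real.log_pow]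
      push_cast; ring
    nlinarith [Real.log_two_gt_d9]
  have hMc : 1 / (M:ℝ) ≤ c / 2 := by
    rw [div_le_div_iff₀ hM0 (by norm_num : (0:ℝ) < 2), hc]
    rw [div_mul_eq_mul_div, le_div_iff₀ hn0]
    have : (2:ℝ) * n ≤ M * d := by exact_mod_cast hMx
    linarith
  have hlog1 : Real.log ((M:ℝ) + 1) ≤ Real.log M + 1 / M := by
    have hpos : (0:ℝ) < ((M:ℝ) + 1) / M := by positivity
    have := Real.log_le_sub_one_of_pos hpos
    rw [Real.log_div (by positivity) (ne_of_gt hM0)] at this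
    have heq : ((M:ℝ) + 1) / M - 1 = 1 / M := by field_simp; ring
    linarith [this, heq ▸ this]
  have hBc : B * c = 1 + Real.log M := by
    rw [hB, hc]; field_simp
  have key : 1 + Real.log ((M:ℝ) + 1) ≤ (B - 1) * (c + c ^ 2 / 2) := by
    have hexpand : (B - 1) * (c + c ^ 2 / 2)
        = B * c + (B * c) * (c / 2) - c - c ^ 2 / 2 := by ring
    rw [hexpand, hBc]
    have hprod : 0 ≤ (Real.log M - 5 / 2) * c := by
      apply mul_nonneg _ hc0.le; linarith
    nlinarith [hlog1, hMc, hc0.le, hchalf, hprod]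
  have hNge : B - 1 ≤ (N : ℝ) := by linarith
  have hs0 : 0 ≤ c + c ^ 2 / 2 := by positivity
  have hpow : ((((n - d : ℕ)) : ℝ) / (n : ℝ)) ^ N ≤ Real.exp (-(1 + Real.log ((M:ℝ) + 1))) := by
    rw [hbase]
    calc (1 - c) ^ N ≤ (Real.exp (-(c + c ^ 2 / 2))) ^ N := by
          apply pow_le_pow_left₀ (by linarith) (one_sub_le_exp_neg c hc0.le (by linarith))
      _ = Real.exp ((N : ℝ) * (-(c + c ^ 2 / 2))) := by
          rw [← Real.exp_nat_mul]
      _ ≤ Real.exp (-(1 + Real.log ((M:ℝ) + 1))) := by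
          apply Real.exp_le_exp.mpr
          have h7 : (B - 1) * (c + c ^ 2 / 2) ≤ (N:ℝ) * (c + c ^ 2 / 2) :=
            mul_le_mul_of_nonneg_right hNge hs0
          nlinarith [key, h7]
  calc Real.exp 1 * ((M : ℝ) + 1) * ((((n - d : ℕ)) : ℝ) / (n : ℝ)) ^ N
      ≤ Real.exp 1 * ((M : ℝ) + 1) * Real.exp (-(1 + Real.log ((M:ℝ) + 1))) := by
        apply mul_le_mul_of_nonneg_left hpow (by positivity)
    _ = Real.exp 1 * Real.exp (Real.log ((M:ℝ)+1)) * Real.exp (-(1 + Real.log ((M:ℝ)+1))) := by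
        rw [Real.exp_log (by positivity : (0:ℝ) < (M:ℝ) + 1)]
    _ = Real.exp (1 + Real.log ((M:ℝ)+1) + (-(1 + Real.log ((M:ℝ)+1)))) := by
        rw [Real.exp_add, Real.exp_add]
    _ = 1 := by rw [show (1 + Real.log ((M:ℝ)+1) + (-(1 + Real.log ((M:ℝ)+1)))) = 0 by ring, Real.exp_zero]


open Finset

section PCAsetup

variable (t k v d N : ℕ) [NeZero v]

/-- Tuples on `C` represented as functions on `Fin k` vanishing outside `C`. -/
def tup0 (C : Finset (Fin k)) : Finset (Fin k → Fin v) :=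
  univ.filter fun f => ∀ j ∉ C, f j = 0

lemma card_tup0 (C : Finset (Fin k)) : (tup0 k v C).card = v ^ C.card := by
  classical
  have e : {f // f ∈ tup0 k v C} ≃ ({j // j ∈ C} → Fin v) := by
    refine
      { toFun := fun f j => f.1 j.1,
        invFun := fun g => ⟨fun j => if hj : j ∈ C then g ⟨j, hj⟩ else 0, ?_⟩,
        left_inv := ?_, right_inv := ?_ }
    · simp only [tup0, mem_filter, mem_univ, true_and]
      intro j hj; rw [dif_neg hj]
    · rintro ⟨f, hf⟩
      simp only [tup0, mem_filter, mem_univ, true_and] at hf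
      apply Subtype.ext; funext j
      by_cases hj : j ∈ C
      · simp [hj]
      · simp [hj, hf j hj]
    · intro g; funext j; simp [j.2]
  have h2 := Fintype.card_congr e
  rw [Fintype.card_coe] at h2
  rw [h2]
  simp [Fintype.card_fun, Fintype.card_coe]

/-- Admissible index: a `t`-set of columns together with a `d`-set of tuples on it. -/
def isAdm (b : Finset (Fin k) × Finset (Fin k → Fin v)) : Prop :=
  b.1.card = t ∧ b.2 ⊆ tup0 k v b.1 ∧ b.2.card = d

instance : DecidablePred (isAdm t k v d) := fun _ => by unfold isAdm; infer_instance

/-- Index type for the events of the local lemma. -/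
abbrev Idx := {b : Finset (Fin k) × Finset (Fin k → Fin v) // isAdm t k v d b}

/-- The bad event: all `d` tuples in `a.1.2` are uncovered on columns `a.1.1`. -/
def Ev (a : Idx t k v d) : Finset (Fin k → Fin N → Fin v) :=
  univ.filter fun ω => ∀ f ∈ a.1.2, ∀ i : Fin N, ¬ ∀ j ∈ a.1.1, ω j i = f j

lemma mem_Ev {a : Idx t k v d} {ω : Fin k → Fin N → Fin v} :
    ω ∈ Ev t k v d N a ↔ ∀ f ∈ a.1.2, ∀ i : Fin N, ¬ ∀ j ∈ a.1.1, ω j i = f j := by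
  simp [Ev]

lemma Ev_congr {a : Idx t k v d} {ω₁ ω₂ : Fin k → Fin N → Fin v}
    (h : ∀ j ∈ a.1.1, ω₁ j = ω₂ j) : ω₁ ∈ Ev t k v d N a → ω₂ ∈ Ev t k v d N a := by
  rw [mem_Ev, mem_Ev]
  intro H f hf i hall
  exact H f hf i (fun j hj => by rw [h j hj]; exact hall j hj)

lemma card_Ev (a : Idx t k v d) (hd : d ≤ v ^ t) :
    (Ev t k v d N a).card = (v ^ t - d) ^ N * ((v ^ N) ^ (k - t)) := by
  classical
  obtain ⟨⟨C, S⟩, hC, hSsub, hScard⟩ := a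
  simp only at hC hSsub hScard ⊢
  set P : (Fin k → Fin N → Fin v) → Prop :=
    fun ω => ∀ f ∈ S, ∀ i : Fin N, ¬ ∀ j ∈ C, ω j i = f j with hP
  have hcard1 : (Ev t k v d N ⟨(C, S), ⟨hC, hSsub, hScard⟩⟩).card
      = Fintype.card {ω // P ω} := by
    rw [Fintype.card_subtype]; rfl
  set P₁ : ({j // j ∈ C} → Fin N → Fin v) → Prop :=
    fun g => ∀ f ∈ S, ∀ i : Fin N, ¬ ∀ j : {j // j ∈ C}, g j i = f j.1 with hP₁
  have e1 : {ω // P ω} ≃ {g : {j // j ∈ C} → Fin N → Fin v // P₁ g} × ({j // j ∉ C} → Fin N → Fin v) := by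
    refine
      { toFun := fun ω => (⟨fun j => ω.1 j.1, ?_⟩, fun j => ω.1 j.1),
        invFun := fun gh => ⟨fun j => if hj : j ∈ C then gh.1.1 ⟨j, hj⟩ else gh.2 ⟨j, hj⟩, ?_⟩,
        left_inv := ?_, right_inv := ?_ }
    · intro f hf i hall
      exact ω.2 f hf i (fun j hj => hall ⟨j, hj⟩)
    · intro f hf i hall
      apply gh.1.2 f hf i
      intro j
      have h5 := hall j.1 j.2
      simpa [j.2] using h5
    · rintro ⟨ω, hω⟩
      apply Subtype.ext; funext j
      by_cases hj : j ∈ C <;> simp [hj]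
    · rintro ⟨⟨g, hg⟩, h⟩
      refine Prod.ext (Subtype.ext ?_) ?_ <;> funext j <;> simp [j.2]
  set Sres : Finset ({j // j ∈ C} → Fin v) := S.image (fun f => fun j => f j.1) with hSres
  have e2 : {g : {j // j ∈ C} → Fin N → Fin v // P₁ g}
      ≃ {h : Fin N → ({j // j ∈ C} → Fin v) // ∀ i, h i ∉ Sres} := by
    refine Equiv.subtypeEquiv (Equiv.piComm fun (j : {j // j ∈ C}) (i : Fin N) => Fin v) ?_
    intro g
    constructor
    · intro H i hmem
      rw [hSres, mem_image] at hmem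
      obtain ⟨f, hf, heq⟩ := hmem
      exact H f hf i (fun j => (congrFun heq j).symm)
    · intro H f hf i hall
      apply H i
      rw [hSres, mem_image]
      exact ⟨f, hf, funext fun j => (hall j).symm⟩
  have e3 : {h : Fin N → ({j // j ∈ C} → Fin v) // ∀ i, h i ∉ Sres}
      ≃ ∀ _ : Fin N, {y : {j // j ∈ C} → Fin v // y ∉ Sres} :=
    Equiv.subtypePiEquivPi (β := fun _ : Fin N => ({j // j ∈ C} → Fin v))
      (p := fun _ y => y ∉ Sres)
  have hSres_card : Sres.card = d := by
    rw [hSres, Finset.card_image_of_injOn, hScard]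
    intro f1 h1 f2 h2 heq
    have hf1 := (mem_filter.mp (hSsub h1)).2
    have hf2 := (mem_filter.mp (hSsub h2)).2
    funext j
    by_cases hj : j ∈ C
    · exact congrFun heq ⟨j, hj⟩
    · rw [hf1 j hj, hf2 j hj]
  have hcardτ : Fintype.card ({j // j ∈ C} → Fin v) = v ^ t := by
    simp [Fintype.card_fun, Fintype.card_coe, hC]
  have hcard_sub : Fintype.card {y : {j // j ∈ C} → Fin v // y ∉ Sres} = v ^ t - d := by
    have hcc := Fintype.card_subtype_compl (fun y : {j // j ∈ C} → Fin v => y ∈ Sres)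
    rw [hcc, hcardτ]
    congr 1
    rw [Fintype.card_coe]
    exact hSres_card
  have hcomp : Fintype.card {j // j ∉ C} = k - t := by
    have := Fintype.card_subtype_compl (fun j : Fin k => j ∈ C)
    rw [this, Fintype.card_fin, Fintype.card_coe, hC]
  rw [hcard1, Fintype.card_congr e1, Fintype.card_prod,
    Fintype.card_congr e2, Fintype.card_congr e3]
  rw [Fintype.card_pi]
  simp only [hcard_sub, Finset.prod_const, Finset.card_univ, Fintype.card_fin]
  congr 1
  rw [Fintype.card_fun, hcomp]
  congr 1
  simp [Fintype.card_fun, Fintype.card_fin]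

lemma card_Omega : Fintype.card (Fin k → Fin N → Fin v) = (v ^ N) ^ k := by
  simp [Fintype.card_fun, Fintype.card_fin]



def Nbr (a : Idx t k v d) : Finset (Idx t k v d) :=
  univ.filter fun b => (b.1.1 ∩ a.1.1).Nonempty

lemma card_Nbr (hk : 0 < k) (a : Idx t k v d) :
    (Nbr t k v d a).card ≤ t * k.choose (t - 1) * ((v ^ t).choose d) := by
  classical
  set Ca := a.1.1 with hCa
  set badC : Finset (Finset (Fin k)) :=
    (univ.powersetCard t).filter (fun C' => (C' ∩ Ca).Nonempty) with hbadC
  -- step 1 : inject into a sigma set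
  have step1 : (Nbr t k v d a).card
      ≤ (badC.sigma fun C' => (tup0 k v C').powersetCard d).card := by
    apply card_le_card_of_injOn (fun b => ⟨b.1.1, b.1.2⟩)
    · intro b hb
      rw [mem_coe, mem_sigma]
      obtain ⟨hb1, hb2, hb3⟩ := b.2
      constructor
      · rw [hbadC, mem_filter]
        refine ⟨?_, ?_⟩
        · rw [mem_powersetCard_univ]; exact hb1
        · exact (mem_filter.mp (mem_coe.mp hb)).2
      · rw [mem_powersetCard]; exact ⟨hb2, hb3⟩
    · intro b1 _ b2 _ heq
      injection heq with h1 h2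
      exact Subtype.ext (Prod.ext h1 h2)
  -- step 2 : cardinality of the sigma set
  have step2 : (badC.sigma fun C' => (tup0 k v C').powersetCard d).card
      = badC.card * ((v ^ t).choose d) := by
    rw [card_sigma]
    have hsum : ∀ C' ∈ badC, ((tup0 k v C').powersetCard d).card = (v ^ t).choose d := by
      intro C' hC'
      have hc : C'.card = t := by
        rw [hbadC, mem_filter, mem_powersetCard_univ] at hC'
        exact hC'.1
      rw [card_powersetCard, card_tup0, hc]
    rw [Finset.sum_congr rfl hsum, Finset.sum_const, smul_eq_mul]
  -- step 3 : counting bad column sets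
  have step3 : badC.card ≤ t * k.choose (t - 1) := by
    have : badC.card ≤ (Ca ×ˢ ((univ : Finset (Fin k)).powersetCard (t - 1))).card := by
      apply card_le_card_of_injOn
        (fun C' => if h : (C' ∩ Ca).Nonempty
          then ((C' ∩ Ca).min' h, C'.erase ((C' ∩ Ca).min' h)) else (⟨0, hk⟩, ∅))
      · intro C' hC'
        rw [hbadC, mem_coe, mem_filter, mem_powersetCard_univ] at hC'
        obtain ⟨hcard, hne⟩ := hC'
        beta_reduce
        rw [dif_pos hne, mem_coe, Finset.mem_product]
        have hmem := Finset.min'_mem _ hne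
        rw [mem_inter] at hmem
        constructor
        · exact hmem.2
        · rw [mem_powersetCard_univ, card_erase_of_mem hmem.1, hcard]
      · intro C1 h1 C2 h2 heq
        rw [hbadC, mem_coe, mem_filter, mem_powersetCard_univ] at h1 h2
        simp only [dif_pos h1.2, dif_pos h2.2, Prod.mk.injEq] at heq
        obtain ⟨hc, he⟩ := heq
        have hm1 : (C1 ∩ Ca).min' h1.2 ∈ C1 :=
          (mem_inter.mp (Finset.min'_mem _ h1.2)).1
        have hm2 : (C2 ∩ Ca).min' h2.2 ∈ C2 :=
          (mem_inter.mp (Finset.min'_mem _ h2.2)).1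
        rw [← insert_erase hm1, ← insert_erase hm2, he, hc]
    refine le_trans this ?_
    rw [Finset.card_product, card_powersetCard, card_univ, Fintype.card_fin, a.2.1]
  calc (Nbr t k v d a).card ≤ badC.card * ((v ^ t).choose d) := step1.trans (le_of_eq step2)
    _ ≤ (t * k.choose (t - 1)) * ((v ^ t).choose d) := Nat.mul_le_mul_right _ step3

end PCAsetup


/-- Convert the exponential bound into the LLL hypothesis shape. -/
lemma p_le_lll_bound (M : ℕ) (p : ℝ) (hM : 1 ≤ M) (hp0 : 0 ≤ p)
    (h : Real.exp 1 * ((M : ℝ) + 1) * p ≤ 1) :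
    p ≤ (1 / ((M : ℝ) + 1)) * (1 - 1 / ((M : ℝ) + 1)) ^ M := by
  have hM0 : (0:ℝ) < M := by exact_mod_cast hM
  have hM1 : (0:ℝ) < (M:ℝ) + 1 := by linarith
  have h1 : ((M:ℝ) + 1) / M ≤ Real.exp (1 / M) := by
    have := Real.add_one_le_exp (1 / (M:ℝ))
    have heq : ((M:ℝ) + 1) / M = 1 / M + 1 := by field_simp; ring
    linarith
  have h2 : (((M:ℝ) + 1) / M) ^ M ≤ Real.exp 1 := by
    calc (((M:ℝ) + 1) / M) ^ M ≤ (Real.exp (1 / M)) ^ M := by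
          apply pow_le_pow_left₀ (by positivity) h1
      _ = Real.exp ((M:ℝ) * (1 / M)) := by rw [← Real.exp_nat_mul]
      _ = Real.exp 1 := by rw [mul_one_div, div_self (ne_of_gt hM0)]
  have hx : 1 - 1 / ((M:ℝ) + 1) = (M:ℝ) / ((M:ℝ) + 1) := by field_simp; ring
  have hinv : 1 / Real.exp 1 ≤ ((M:ℝ) / ((M:ℝ) + 1)) ^ M := by
    have hpos : (0:ℝ) < (((M:ℝ) + 1) / M) ^ M := by positivity
    have := one_div_le_one_div_of_le hpos h2
    calc 1 / Real.exp 1 ≤ 1 / ((((M:ℝ) + 1) / M) ^ M) := this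
      _ = ((M:ℝ) / ((M:ℝ) + 1)) ^ M := by
          rw [one_div, ← inv_pow]
          congr 1
          rw [inv_div]
  have hple : p ≤ 1 / (Real.exp 1 * ((M:ℝ) + 1)) := by
    rw [le_div_iff₀ (by positivity)]
    nlinarith [h]
  calc p ≤ 1 / (Real.exp 1 * ((M:ℝ) + 1)) := hple
    _ = (1 / ((M:ℝ) + 1)) * (1 / Real.exp 1) := by field_simp
    _ ≤ (1 / ((M:ℝ) + 1)) * (((M:ℝ) / ((M:ℝ) + 1)) ^ M) := by
        apply mul_le_mul_of_nonneg_left hinv (by positivity)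
    _ = (1 / ((M:ℝ) + 1)) * (1 - 1 / ((M:ℝ) + 1)) ^ M := by rw [hx]

lemma nat_two_mul_le_pow (v m : ℕ) (hv : 2 ≤ v) : 2 * m ≤ v ^ m := by
  induction m with
  | zero => simp
  | succ m ih =>
    rcases Nat.eq_zero_or_pos m with rfl | hm
    · simpa using hv
    · calc 2 * (m + 1) ≤ 2 * (2 * m) := by omega
        _ ≤ 2 * v ^ m := by omega
        _ ≤ v * v ^ m := Nat.mul_le_mul_right _ hv
        _ = v ^ (m + 1) := by rw [pow_succ]; ring

lemma nat_two_pow_le_central (d : ℕ) : 2 ^ d ≤ (2 * d).choose d := by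
  induction d with
  | zero => simp
  | succ d ih =>
    have h1 : (2 * d + 1).choose (d + 1) = (2 * d).choose d + (2 * d).choose (d + 1) :=
      Nat.choose_succ_succ (2 * d) d
    have h2 : (2 * (d + 1)).choose (d + 1)
        = (2 * d + 1).choose d + (2 * d + 1).choose (d + 1) := by
      rw [show 2 * (d + 1) = (2 * d + 1) + 1 by ring]
      exact Nat.choose_succ_succ (2 * d + 1) d
    have h3 : (2 * d).choose d ≤ (2 * d + 1).choose d := Nat.choose_mono d (by omega)
    have h4 : (2 * d).choose d ≤ (2 * d + 1).choose (d + 1) := by omega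
    calc 2 ^ (d + 1) = 2 ^ d + 2 ^ d := by ring
      _ ≤ (2 * d + 1).choose d + (2 * d + 1).choose (d + 1) :=
          Nat.add_le_add (le_trans ih h3) (le_trans ih h4)
      _ = (2 * (d + 1)).choose (d + 1) := h2.symm


/-- The number of distinct `t`-tuples `x : C → Fin v` covered by the rows of the array `A`
restricted to the column set `C`. -/
noncomputable def coverCount {N k v : ℕ} (A : Fin N → Fin k → Fin v) (C : Finset (Fin k)) : ℕ :=
  Nat.card {x : C → Fin v // ∃ i : Fin N, (fun j : C => A i j) = x}

theorem stmt_7 (t k v : ℕ) (ht : 2 ≤ t) (hv : 2 ≤ v) (hk : 2 * t ≤ k)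
    (h1 : v * (t - 1) ≤ v ^ t - 1) :
    ∃ (N : ℕ) (A : Fin N → Fin k → Fin v),
      (∀ C : Finset (Fin k), C.card = t → v ^ t - v * (t - 1) + 1 ≤ coverCount A C) ∧
      (N : ℝ) ≤ ((v : ℝ) ^ (t - 1) / ((t : ℝ) - 1)) *
          (1 + Real.log ((t : ℝ) * (k.choose (t - 1) : ℝ) * ((v ^ t).choose (v * (t - 1)) : ℝ))) := by
  classical
  haveI : NeZero v := ⟨by omega⟩
  set d := v * (t - 1) with hdd
  set n := v ^ t with hnn
  have htk : t ≤ k := by omega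
  have hk0 : 0 < k := by omega
  have hd2 : 2 ≤ d := by
    calc 2 = 2 * 1 := rfl
      _ ≤ v * (t - 1) := Nat.mul_le_mul hv (by omega)
  have hvt1 : 2 * (t - 1) ≤ v ^ (t - 1) := nat_two_mul_le_pow v (t - 1) hv
  have hvv : v * v ^ (t - 1) = n := by
    rw [hnn, ← pow_succ']
    congr 1
    omega
  have h2d : 2 * d ≤ n := by
    calc 2 * d = v * (2 * (t - 1)) := by rw [hdd]; ring
      _ ≤ v * v ^ (t - 1) := Nat.mul_le_mul_left v hvt1
      _ = n := hvv
  have hdlt : d < n := by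
    have hn1 : 1 ≤ n := by omega
    omega
  have hCt : t.choose (t - 1) = t := by
    obtain ⟨m, rfl⟩ : ∃ m, t = m + 1 := ⟨t - 1, by omega⟩
    have hm : m + 1 - 1 = m := rfl
    rw [hm, Nat.choose_succ_self_right]
  have hCk2 : 2 ≤ k.choose (t - 1) := by
    have h2 : t.choose (t - 1) ≤ k.choose (t - 1) := Nat.choose_mono (t - 1) htk
    omega
  have hCn : 2 ^ d ≤ n.choose d :=
    le_trans (nat_two_pow_le_central d) (Nat.choose_mono d h2d : (2*d).choose d ≤ n.choose d)
  set Mn := t * k.choose (t - 1) * n.choose d with hMn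
  have h2d4 : 4 ≤ 2 ^ d := by
    calc 4 = 2 ^ 2 := rfl
      _ ≤ 2 ^ d := Nat.pow_le_pow_right (by norm_num) hd2
  have hM16 : 16 ≤ Mn := by
    calc 16 = 2 * 2 * 4 := rfl
      _ ≤ t * k.choose (t - 1) * n.choose d :=
          Nat.mul_le_mul (Nat.mul_le_mul ht hCk2) (le_trans h2d4 hCn)
  have hMx : 2 * n ≤ Mn * d := by
    have hkey : 2 * n ≤ 2 ^ d * d := by
      have h2v : 2 * v ≤ 2 ^ v := nat_two_mul_le_pow 2 v (le_refl 2)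
      have hmono : (2 * v) ^ (t - 1) ≤ (2 ^ v) ^ (t - 1) := Nat.pow_le_pow_left h2v _
      have e1 : 2 ^ d = (2 ^ v) ^ (t - 1) := by rw [hdd, ← pow_mul]
      have e2 : (2 * v) ^ (t - 1) = 2 ^ (t - 1) * v ^ (t - 1) := mul_pow 2 v (t - 1)
      have h3 : 2 ≤ 2 ^ (t - 1) := by
        calc 2 = 2 ^ 1 := rfl
          _ ≤ 2 ^ (t - 1) := Nat.pow_le_pow_right (by norm_num) (by omega)
      have h4 : 1 ≤ t - 1 := by omega
      calc 2 * n = (2 * 1) * (v ^ (t - 1) * v) := by rw [← hvv]; ring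
        _ ≤ (2 ^ (t - 1) * (t - 1)) * (v ^ (t - 1) * v) := by
            apply Nat.mul_le_mul_right
            exact Nat.mul_le_mul h3 h4
        _ = (2 ^ (t - 1) * v ^ (t - 1)) * (v * (t - 1)) := by ring
        _ ≤ (2 ^ v) ^ (t - 1) * (v * (t - 1)) := by
            apply Nat.mul_le_mul_right
            rw [← e2]; exact hmono
        _ = 2 ^ d * d := by rw [e1, hdd]
    calc 2 * n ≤ 2 ^ d * d := hkey
      _ ≤ n.choose d * d := Nat.mul_le_mul_right _ hCn
      _ ≤ Mn * d := by
          apply Nat.mul_le_mul_right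
          rw [hMn]
          have : 1 * n.choose d ≤ t * k.choose (t - 1) * n.choose d := by
            apply Nat.mul_le_mul_right
            have : 1 * 1 ≤ t * k.choose (t - 1) := Nat.mul_le_mul (by omega) (by omega)
            omega
          omega
  -- the real bound
  set BB : ℝ := ((v : ℝ) ^ (t - 1) / ((t : ℝ) - 1)) *
      (1 + Real.log ((t : ℝ) * (k.choose (t - 1) : ℝ) * ((n).choose d : ℝ))) with hBB
  have htR : (0:ℝ) < (t:ℝ) - 1 := by
    have : (2:ℝ) ≤ (t:ℝ) := by exact_mod_cast ht
    linarith
  have hdR : (0:ℝ) < (d:ℝ) := by exact_mod_cast (by omega : 0 < d)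
  have hnR : (0:ℝ) < (n:ℝ) := by exact_mod_cast (by omega : 0 < n)
  have hBform : BB = ((n : ℝ) / (d : ℝ)) * (1 + Real.log (Mn : ℝ)) := by
    have hlogarg : ((t : ℝ) * (k.choose (t - 1) : ℝ) * ((n).choose d : ℝ)) = (Mn : ℝ) := by
      rw [hMn]; push_cast; ring
    rw [hBB, hlogarg]
    congr 1
    rw [div_eq_div_iff (ne_of_gt htR) (ne_of_gt hdR)]
    have htc : ((t - 1 : ℕ) : ℝ) = (t : ℝ) - 1 := by
      push_cast [Nat.cast_sub (by omega : 1 ≤ t)]; ring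
    have hvt : (v : ℝ) ^ (t - 1) * (v : ℝ) = (v : ℝ) ^ t := by
      rw [← pow_succ]
      congr 1
      omega
    have hdc : (d : ℝ) = (v : ℝ) * ((t : ℝ) - 1) := by
      rw [hdd]; push_cast [Nat.cast_sub (by omega : 1 ≤ t)]; ring
    have hnc : (n : ℝ) = (v : ℝ) ^ t := by rw [hnn]; push_cast; ring
    rw [hdc, hnc, ← hvt]
    ring
  have hMn1R : (1:ℝ) ≤ (Mn:ℝ) := by exact_mod_cast (by omega : 1 ≤ Mn)
  have hBpos : 0 ≤ BB := by
    rw [hBform]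
    have : 0 ≤ Real.log (Mn:ℝ) := Real.log_nonneg hMn1R
    positivity
  set N := ⌊BB⌋₊ with hN
  have hNB : (N : ℝ) ≤ BB := Nat.floor_le hBpos
  have hBN : BB < (N : ℝ) + 1 := Nat.lt_floor_add_one BB
  have hnum := numeric_main n d Mn N BB hd2 h2d hM16 hMx hBform hBN
  set p : ℝ := ((((n - d : ℕ)) : ℝ) / (n : ℝ)) ^ N with hp
  have hp0 : 0 ≤ p := by positivity
  have hpx := p_le_lll_bound Mn p (by omega) hp0 hnum
  set x : ℝ := 1 / ((Mn : ℝ) + 1) with hx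
  have hx0 : 0 < x := by rw [hx]; positivity
  have hx1 : x < 1 := by
    rw [hx]
    rw [div_lt_one (by positivity)]
    linarith
  -- the probability space and events
  have hΓ : ∀ a : Idx t k v d, (Nbr t k v d a).card ≤ Mn := by
    intro a
    rw [hMn, hnn]
    exact card_Nbr t k v d hk0 a
  have hpcard : ∀ a : Idx t k v d, ((Ev t k v d N a).card : ℝ)
      ≤ p * (Fintype.card (Fin k → Fin N → Fin v) : ℝ) := by
    intro a
    have hE := card_Ev t k v d N a (le_of_lt (hnn ▸ hdlt))
    have hvR : (0:ℝ) < (v:ℝ) := by exact_mod_cast (by omega : 0 < v)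
    have hEcast : ((Ev t k v d N a).card : ℝ)
        = (((n - d : ℕ)) : ℝ) ^ N * ((v : ℝ) ^ N) ^ (k - t) := by
      rw [hE]
      rw [hnn]
      push_cast
      try ring
    have hΩcast : (Fintype.card (Fin k → Fin N → Fin v) : ℝ) = ((v : ℝ) ^ N) ^ k := by
      rw [card_Omega]
      push_cast
      try ring
    rw [hEcast, hΩcast]
    have hsplit : ((v : ℝ) ^ N) ^ k = ((v : ℝ) ^ N) ^ t * ((v : ℝ) ^ N) ^ (k - t) := by
      rw [← pow_add]
      congr 1
      omega
    have hcomm : ((v : ℝ) ^ t) ^ N = ((v : ℝ) ^ N) ^ t := pow_right_comm ((v:ℝ)) t N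
    have hnc : (n : ℝ) = (v : ℝ) ^ t := by rw [hnn]; push_cast; ring
    rw [hp, hsplit, div_pow, hnc, hcomm]
    apply le_of_eq
    field_simp
  have hind : ∀ (a : Idx t k v d) (T : Finset (Idx t k v d)),
      (∀ b ∈ T, b ∉ Nbr t k v d a) →
      ((Ev t k v d N a) ∩ avoidSet (Ev t k v d N) T).card * Fintype.card (Fin k → Fin N → Fin v)
        = (Ev t k v d N a).card * (avoidSet (Ev t k v d N) T).card := by
    intro a T hT
    apply cylinder_indep a.1.1
    · intro ω₁ ω₂ hagree
      exact Ev_congr t k v d N hagree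
    · intro ω₁ ω₂ hagree hmem
      rw [mem_avoidSet] at hmem ⊢
      intro b hb hEb
      apply hmem b hb
      refine Ev_congr t k v d N ?_ hEb
      intro j hj
      have hjC : j ∉ a.1.1 := by
        intro hjC
        have hbn : b ∈ Nbr t k v d a := by
          rw [Nbr, Finset.mem_filter]
          exact ⟨Finset.mem_univ b, ⟨j, Finset.mem_inter.mpr ⟨hj, hjC⟩⟩⟩
        exact hT b hb hbn
      exact (hagree j hjC).symm
  obtain ⟨ω, hω⟩ := finite_LLL_exists (Ev t k v d N) (Nbr t k v d) p x Mn
    hx0 hx1 hΓ hpcard hpx hind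
  refine ⟨N, fun i j => ω j i, ?_, ?_⟩
  · -- coverage
    intro C hC
    by_contra hcon
    push_neg at hcon
    set P : (↥C → Fin v) → Prop := fun xx => ∃ i : Fin N, (fun j : ↥C => ω j.1 i) = xx with hP
    have hcc : coverCount (fun i j => ω j i) C = (Finset.univ.filter P).card := by
      rw [coverCount, Nat.card_eq_fintype_card, Fintype.card_subtype]
    have htotal : (Finset.univ.filter P).card
        + (Finset.univ.filter (fun xx => ¬ P xx)).card = n := by
      rw [Finset.card_filter_add_card_filter_not, Finset.card_univ]
      rw [hnn]
      simp [Fintype.card_fun, Fintype.card_coe, hC]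
    have hUnc : d ≤ (Finset.univ.filter (fun xx => ¬ P xx)).card := by
      rw [hcc] at hcon
      omega
    obtain ⟨S₀, hS₀sub, hS₀card⟩ := Finset.exists_subset_card_eq hUnc
    set ext0 : (↥C → Fin v) → (Fin k → Fin v) :=
      fun xx j => if hj : j ∈ C then xx ⟨j, hj⟩ else 0 with hext0
    have hinj : Function.Injective ext0 := by
      intro x1 x2 heq
      funext j
      have h7 := congrFun heq j.1
      simp only [hext0] at h7
      rw [dif_pos j.2, dif_pos j.2] at h7
      exact h7
    set S : Finset (Fin k → Fin v) := S₀.image ext0 with hS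
    have hadm : isAdm t k v d (C, S) := by
      refine ⟨hC, ?_, ?_⟩
      · intro f hf
        have hf' : f ∈ S₀.image ext0 := by rw [← hS]; exact hf
        obtain ⟨xx, _, rfl⟩ := Finset.mem_image.mp hf'
        rw [tup0, Finset.mem_filter]
        exact ⟨Finset.mem_univ _, fun j hj => by rw [hext0]; simp [dif_neg hj]⟩
      · rw [hS, Finset.card_image_of_injective S₀ hinj, hS₀card]
    have hnotE := hω ⟨(C, S), hadm⟩
    rw [mem_Ev] at hnotE
    push_neg at hnotE
    obtain ⟨f, hfS, i, hi⟩ := hnotE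
    have hfS' : f ∈ S₀.image ext0 := by rw [← hS]; exact hfS
    obtain ⟨xx, hxx, rfl⟩ := Finset.mem_image.mp hfS'
    have hxxunc := hS₀sub hxx
    rw [Finset.mem_filter] at hxxunc
    apply hxxunc.2
    refine ⟨i, funext fun j => ?_⟩
    have h8 := hi j.1 j.2
    simp only [hext0] at h8
    rw [dif_pos j.2] at h8
    exact h8
  · exact hNB
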